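/- Let A be a Banach algebra, φ a non-zero multiplicative linear functional on A, and suppose A is left φ-biflat with ker(φ) equal to the norm-closure of A·ker(φ). Then there exists a bounded left A-module morphism θ : A/ker(φ) → A** such that φ̃(θ(a + ker φ)) = φ(a) for each a ∈ A (this is Step 2 of the proof of Lemma 2.1). -/

import Mathlib

/-!
We realize the bidual `(B ⊗_p B)**` of the projective tensor product of a Banach algebra `B`
with itself canonically as the dual of the Banach space `B →L[ℂ] B* ` of bounded bilinear
forms on `B` (the latter being isometrically isomorphic to `(B ⊗_p B)*`).  All the canonical
Banach `B`-bimodule actions are spelled out explicitly through this identification.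
The multiplication of the Banach algebra `B` is encoded as a bounded bilinear map
`μ : B →L[ℂ] B →L[ℂ] B` (for a Banach algebra `A`, `μ = ContinuousLinearMap.mul ℂ A`).
-/

noncomputable section

namespace NormedSpace

/-- The topological dual of a normed space (removed from Mathlib; old definition restored). -/
abbrev Dual (𝕜 : Type*) [NontriviallyNormedField 𝕜] (E : Type*) [SeminormedAddCommGroup E]
    [NormedSpace 𝕜 E] : Type _ := E →L[𝕜] 𝕜

end NormedSpace

open ContinuousLinearMap NormedSpace

/-- The space of bounded bilinear forms on `B`, canonically the dual of the projective
tensor product `B ⊗_p B`. -/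
abbrev BilForm (B : Type*) [NormedAddCommGroup B] [NormedSpace ℂ B] : Type _ :=
  B →L[ℂ] Dual ℂ B

/-- The bidual of the projective tensor product `B ⊗_p B`, realized canonically as the dual of
the Banach space of bounded bilinear forms on `B`. -/
abbrev TensorBidual (B : Type*) [NormedAddCommGroup B] [NormedSpace ℂ B] : Type _ :=
  Dual ℂ (BilForm B)

/-- The bidual `B**` of a normed space `B`. -/
abbrev Bidual (B : Type*) [NormedAddCommGroup B] [NormedSpace ℂ B] : Type _ :=
  Dual ℂ (Dual ℂ B)

variable {B : Type*} [NormedAddCommGroup B] [NormedSpace ℂ B]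

/-- The left action of `a ∈ B` (with multiplication `μ`) on `(B ⊗_p B)**`:
`(a • T) β = T ((x, y) ↦ β (a x, y))`, the canonical bidual extension of the
`B`-bimodule action `a • (x ⊗ y) = (a x) ⊗ y` on `B ⊗_p B`. -/
def tensorLSmul (μ : B →L[ℂ] B →L[ℂ] B) (a : B) (T : TensorBidual B) : TensorBidual B :=
  T.comp ((compL ℂ B B (Dual ℂ B)).flip (μ a))

/-- The right action of `a ∈ B` on `(B ⊗_p B)**`:
`(T • a) β = T ((x, y) ↦ β (x, y a))`, the canonical bidual extension of the
`B`-bimodule action `(x ⊗ y) • a = x ⊗ (y a)` on `B ⊗_p B`. -/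
def tensorRSmul (μ : B →L[ℂ] B →L[ℂ] B) (T : TensorBidual B) (a : B) : TensorBidual B :=
  T.comp (compL ℂ B (Dual ℂ B) (Dual ℂ B) ((compL ℂ B B ℂ).flip (μ.flip a)))

/-- `π_B^* ψ`, the image of a functional `ψ ∈ B*` under the adjoint of the product
morphism `π_B : B ⊗_p B → B`; as a bilinear form it is `(x, y) ↦ ψ (x y)`.  Thus
`π_B** T ψ = T (piDual μ ψ)` for `T ∈ (B ⊗_p B)**`. -/
def piDual (μ : B →L[ℂ] B →L[ℂ] B) (ψ : Dual ℂ B) : BilForm B :=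
  (compL ℂ B B ℂ ψ).comp μ

/-- The left action of `a ∈ B` on the bidual `B**`: `(a • m) f = m (f ∘ (a * ·))`. -/
def bidualLSmul (μ : B →L[ℂ] B →L[ℂ] B) (a : B) (m : Bidual B) : Bidual B :=
  m.comp ((compL ℂ B B ℂ).flip (μ a))

/-- A Banach algebra `B` (with multiplication `μ` and a multiplicative functional `ψ`) is
*left `ψ`-biflat* if there is a bounded linear map `ρ : B → (B ⊗_p B)**` with
`ρ (a b) = ψ (b) ρ (a) = a • ρ (b)` for all `a, b ∈ B`, and `ψ̃ ∘ π_B** ∘ ρ = ψ`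
(note `(ψ̃ ∘ π_B**) T = T (piDual μ ψ)`). -/
def IsLeftBiflat (μ : B →L[ℂ] B →L[ℂ] B) (ψ : Dual ℂ B) : Prop :=
  ∃ ρ : B →L[ℂ] TensorBidual B,
    (∀ a b : B, ρ (μ a b) = ψ b • ρ a ∧ ρ (μ a b) = tensorLSmul μ a (ρ b)) ∧
    ∀ a : B, ρ a (piDual μ ψ) = ψ a

/-- A Banach algebra `B` is *left `ψ`-amenable* if there is `m ∈ B**` with
`a • m = ψ (a) m` for all `a ∈ B` and `ψ̃ (m) = m (ψ) = 1`. -/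
def IsLeftAmenable (μ : B →L[ℂ] B →L[ℂ] B) (ψ : Dual ℂ B) : Prop :=
  ∃ m : Bidual B, (∀ (a : B) (f : Dual ℂ B), m (f.comp (μ a)) = ψ a * m f) ∧ m ψ = 1

set_option maxHeartbeats 1000000
set_option synthInstance.maxHeartbeats 400000

variable {A : Type*} [NonUnitalNormedRing A] [NormedSpace ℂ A]
  [IsScalarTower ℂ A A] [SMulCommClass ℂ A A] [CompleteSpace A]

/-- Step 2 of the proof of Lemma 2.1: if `A` is left `φ`-biflat and
`ker φ` is the norm-closure of the set of products `A · ker φ`, then there is a bounded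
left `A`-module morphism `θ : A ⧸ ker φ → A**` with `φ̃ (θ (a + ker φ)) = φ (a)` for all
`a ∈ A`.  The quotient carries the quotient left `A`-module structure
`a • (b + ker φ) = a b + ker φ`, and the left action on `A**` is the canonical one,
`(a • m) f = m (f ∘ (a * ·))`. -/
theorem exists_module_morphism_quotient_to_bidual
    (φ : A →L[ℂ] ℂ) (hφ_ne : φ ≠ 0)
    (hφ_mul : ∀ a b : A, φ (a * b) = φ a * φ b)
    (hker : closure {x : A | ∃ a l : A, φ l = 0 ∧ x = a * l} = {x : A | φ x = 0})
    (hbf : IsLeftBiflat (ContinuousLinearMap.mul ℂ A) φ) :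
    ∃ θ : (A ⧸ LinearMap.ker (φ : A →ₗ[ℂ] ℂ)) →L[ℂ] Bidual A,
      (∀ a b : A, θ (Submodule.Quotient.mk (a * b)) =
        bidualLSmul (ContinuousLinearMap.mul ℂ A) a (θ (Submodule.Quotient.mk b))) ∧
      ∀ a : A, θ (Submodule.Quotient.mk a) φ = φ a := by
    classical
  obtain ⟨ρ, hρ, hρπ⟩ := hbf
  set μ := ContinuousLinearMap.mul ℂ A with hμ
  -- the "slice" map `f ↦ ((x, y) ↦ f x * φ y)` from `A*` to bilinear forms
  set S : Dual ℂ A →L[ℂ] BilForm A :=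
    (ContinuousLinearMap.smulRightL ℂ A (Dual ℂ A)).flip φ with hSdef
  have hS : ∀ (f : Dual ℂ A) (x : A), S f x = f x • φ := fun f x => rfl
  -- the unquotiented map `θ0 : A → A**`, `θ0 a f = ρ a (S f)`
  set θ0 : A →L[ℂ] Bidual A :=
    (ContinuousLinearMap.precomp ℂ S).comp ρ with hθ0def
  have hθ0 : ∀ (a : A) (f : Dual ℂ A), θ0 a f = ρ a (S f) := fun a f => rfl
  -- `θ0` vanishes on `ker φ`
  have hker0 : ∀ x : A, φ x = 0 → θ0 x = 0 := by
    intro x hx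
    have hx' : x ∈ closure {x : A | ∃ a l : A, φ l = 0 ∧ x = a * l} := by
      rw [hker]; exact hx
    have hsub : {x : A | ∃ a l : A, φ l = 0 ∧ x = a * l} ⊆ θ0 ⁻¹' {0} := by
      rintro _ ⟨a, l, hl, rfl⟩
      have h1 : ρ (a * l) = 0 := by
        have h2 : ρ (μ a l) = φ l • ρ a := (hρ a l).1
        rw [show a * l = μ a l from rfl, h2, hl]; exact zero_smul ℂ (ρ a)
      simp only [Set.mem_preimage, Set.mem_singleton_iff]
      ext f
      calc θ0 (a * l) f = ρ (a * l) (S f) := rfl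
        _ = 0 := by rw [h1]; rfl
        _ = (0 : Bidual A) f := rfl
    have hclosed : IsClosed (θ0 ⁻¹' {0}) :=
      isClosed_singleton.preimage θ0.continuous
    exact closure_minimal hsub hclosed hx'
  -- lift to the quotient
  have hle : LinearMap.ker (φ : A →ₗ[ℂ] ℂ) ≤ LinearMap.ker (θ0 : A →ₗ[ℂ] Bidual A) := by
    intro x hx
    exact hker0 x hx
  let L : (A ⧸ LinearMap.ker (φ : A →ₗ[ℂ] ℂ)) →ₗ[ℂ] Bidual A :=
    (LinearMap.ker (φ : A →ₗ[ℂ] ℂ)).liftQ (θ0 : A →ₗ[ℂ] Bidual A) hle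
  have hLmk : ∀ a : A, L (Submodule.Quotient.mk a) = θ0 a := fun a => rfl
  have hLcont : Continuous L := by
    rw [(LinearMap.ker (φ : A →ₗ[ℂ] ℂ)).isOpenQuotientMap_mkQ.isQuotientMap.continuous_iff]
    exact θ0.continuous
  refine ⟨⟨L, hLcont⟩, ?_, ?_⟩
  · intro a b
    show L (Submodule.Quotient.mk (a * b)) = bidualLSmul μ a (L (Submodule.Quotient.mk b))
    rw [hLmk, hLmk]
    have hab : a * b = μ a b := rfl
    ext f
    have h2 : ρ (μ a b) = tensorLSmul μ a (ρ b) := (hρ a b).2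
    have hcomm : S (f.comp (μ a)) = (S f).comp (μ a) := by
      ext x y
      rfl
    calc θ0 (a * b) f = ρ (a * b) (S f) := rfl
      _ = tensorLSmul μ a (ρ b) (S f) := by rw [hab, h2]
      _ = ρ b ((S f).comp (μ a)) := rfl
      _ = ρ b (S (f.comp (μ a))) := by rw [hcomm]
      _ = bidualLSmul μ a (θ0 b) f := rfl
  · intro a
    show L (Submodule.Quotient.mk a) φ = φ a
    rw [hLmk]
    have hSφ : S φ = piDual μ φ := by
      ext x y
      show φ x • φ y = φ (x * y)
      rw [hφ_mul, smul_eq_mul]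
    calc θ0 a φ = ρ a (S φ) := rfl
      _ = ρ a (piDual μ φ) := by rw [hSφ]
      _ = φ a := hρπ a
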